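/- Let u_k : [0,T] → ℝ^m be a sequence of absolutely continuous functions with u_k(0) = u₀ and Var_{[0,T]}(u_k) ≤ K for all k. Define σ_k(t) = t + Var_{[0,t]}(u_k), φ_{0_k} = σ_k⁻¹ extended by T on (T + V_k, S] where V_k = Var_{[0,T]}(u_k) and S = T + K, and φ_k = u_k ∘ φ_{0_k}. Then the pairs (φ_{0_k}, φ_k) are 1-Lipschitz on [0,S], and there exists a subsequence converging uniformly on [0,S] to a Lipschitz pair (φ₀, φ) satisfying φ₀'(s) + |φ'(s)| ≤ 1 for a.e. s. -/

import Mathlib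

open Set MeasureTheory Filter Topology

/-- Absolute continuity on `[a,b]` via the integral characterization. -/
def AbsCont {E : Type*} [NormedAddCommGroup E] [NormedSpace ℝ E] (f : ℝ → E) (a b : ℝ) : Prop :=
  ∃ f' : ℝ → E, IntervalIntegrable f' volume a b ∧
    ∀ t ∈ Set.Icc a b, f t = f a + ∫ τ in a..t, f' τ

open intervalIntegral BoundedContinuousFunction

private lemma evar_le_int {E : Type*} [NormedAddCommGroup E] [NormedSpace ℝ E] {f f' : ℝ → E} {T a b : ℝ}
    (hint : IntervalIntegrable f' volume 0 T)
    (hrep : ∀ t ∈ Icc (0:ℝ) T, f t = f 0 + ∫ τ in (0:ℝ)..t, f' τ)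
    (ha : 0 ≤ a) (hab : a ≤ b) (hbT : b ≤ T) :
    eVariationOn f (Icc a b) ≤ ENNReal.ofReal (∫ τ in a..b, ‖f' τ‖) := by
  have hsub0 : ∀ x ∈ Icc (0:ℝ) T, IntervalIntegrable f' volume 0 x := fun x hx =>
    hint.mono_set (by
      rw [uIcc_of_le hx.1, uIcc_of_le (hx.1.trans hx.2)]
      exact Icc_subset_Icc le_rfl hx.2)
  have hmem : ∀ x ∈ Icc a b, x ∈ Icc (0:ℝ) T := fun x hx => ⟨ha.trans hx.1, hx.2.trans hbT⟩
  have hsubn : ∀ x y : ℝ, x ∈ Icc (0:ℝ) T → y ∈ Icc (0:ℝ) T →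
      IntervalIntegrable (fun τ => ‖f' τ‖) volume x y := fun x y hx hy =>
    hint.norm.mono_set (by
      exact uIcc_subset_uIcc (mem_uIcc.mpr <| Or.inl (mem_Icc.mp hx)) (mem_uIcc.mpr <| Or.inl (mem_Icc.mp hy)))
  have hintsub : ∀ x y : ℝ, x ∈ Icc a b → y ∈ Icc a b →
      f y - f x = ∫ τ in x..y, f' τ := by
    intro x y hx hy
    rw [hrep x (hmem x hx), hrep y (hmem y hy), add_sub_add_left_eq_sub,
      integral_interval_sub_left (hsub0 y (hmem y hy)) (hsub0 x (hmem x hx))]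
  apply iSup_le
  rintro ⟨n, u, hu, us⟩
  have step : ∀ i, edist (f (u (i+1))) (f (u i)) ≤
      ENNReal.ofReal (∫ τ in (u i)..(u (i+1)), ‖f' τ‖) := by
    intro i
    rw [edist_dist, dist_eq_norm, hintsub _ _ (us i) (us (i+1))]
    exact ENNReal.ofReal_le_ofReal (norm_integral_le_integral_norm (hu (Nat.le_succ i)))
  have nonneg : ∀ i ∈ Finset.range n, (0:ℝ) ≤ ∫ τ in (u i)..(u (i+1)), ‖f' τ‖ := fun i _ =>
    intervalIntegral.integral_nonneg (hu (Nat.le_succ i)) (fun _ _ => norm_nonneg _)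
  calc (∑ i ∈ Finset.range n, edist (f (u (i+1))) (f (u i)))
      ≤ ∑ i ∈ Finset.range n, ENNReal.ofReal (∫ τ in (u i)..(u (i+1)), ‖f' τ‖) :=
        Finset.sum_le_sum (fun i _ => step i)
    _ = ENNReal.ofReal (∑ i ∈ Finset.range n, ∫ τ in (u i)..(u (i+1)), ‖f' τ‖) :=
        (ENNReal.ofReal_sum_of_nonneg nonneg).symm
    _ = ENNReal.ofReal (∫ τ in (u 0)..(u n), ‖f' τ‖) := by
        rw [sum_integral_adjacent_intervals (fun k _ =>
          hsubn _ _ (hmem _ (us k)) (hmem _ (us (k+1))))]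
    _ ≤ ENNReal.ofReal (∫ τ in a..b, ‖f' τ‖) := by
        apply ENNReal.ofReal_le_ofReal
        exact integral_mono_interval (us 0).1 (hu (Nat.zero_le n)) (us n).2
          (Filter.Eventually.of_forall fun τ => norm_nonneg _)
          (hsubn a b (hmem a ⟨le_rfl, hab⟩) (hmem b ⟨hab, le_rfl⟩))

private lemma graph_lip {E : Type*} [NormedAddCommGroup E] [NormedSpace ℝ E]
    {u : ℝ → E} {φ0 : ℝ → ℝ} {T K : ℝ} (hT : 0 < T) (hK : 0 < K)
    (hAC : AbsCont u 0 T)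
    (hvar : (eVariationOn u (Icc 0 T)).toReal ≤ K)
    (hinv : ∀ t ∈ Icc (0:ℝ) T, φ0 (t + (eVariationOn u (Icc 0 t)).toReal) = t)
    (hext : ∀ s ∈ Icc (T + (eVariationOn u (Icc 0 T)).toReal) (T + K), φ0 s = T) :
    ∀ s ∈ Icc (0:ℝ) (T + K), ∀ s' ∈ Icc (0:ℝ) (T + K),
      |φ0 s - φ0 s'| + ‖u (φ0 s) - u (φ0 s')‖ ≤ |s - s'| := by
  obtain ⟨f', hint, hrep⟩ := hAC
  set V : ℝ → ℝ := fun t => (eVariationOn u (Icc 0 t)).toReal with hV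
  set σ : ℝ → ℝ := fun t => t + V t with hσ
  set G : ℝ → ℝ := fun t => ∫ τ in (0:ℝ)..t, ‖f' τ‖ with hG
  -- finiteness
  have finIcc : ∀ a b : ℝ, 0 ≤ a → a ≤ b → b ≤ T → eVariationOn u (Icc a b) ≠ ⊤ :=
    fun a b ha hab hbT => ne_top_of_le_ne_top ENNReal.ofReal_ne_top
      (evar_le_int hint hrep ha hab hbT)
  have fin : ∀ t, t ∈ Icc (0:ℝ) T → eVariationOn u (Icc 0 t) ≠ ⊤ :=
    fun t ht => finIcc 0 t le_rfl ht.1 ht.2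
  -- additivity
  have add : ∀ t t' : ℝ, 0 ≤ t → t ≤ t' → t' ≤ T →
      V t' = V t + (eVariationOn u (Icc t t')).toReal := by
    intro t t' h0 h1 h2
    have := eVariationOn.Icc_add_Icc u (s := univ) h0 h1 (mem_univ t)
    simp only [univ_inter] at this
    rw [hV]
    simp only
    rw [← this, ENNReal.toReal_add (fin t ⟨h0, h1.trans h2⟩) (finIcc t t' h0 h1 h2)]
  have Vnonneg : ∀ t, 0 ≤ V t := fun t => ENNReal.toReal_nonneg
  have Vmono : ∀ t t' : ℝ, 0 ≤ t → t ≤ t' → t' ≤ T → V t ≤ V t' := by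
    intro t t' h0 h1 h2
    rw [add t t' h0 h1 h2]
    exact le_add_of_nonneg_right ENNReal.toReal_nonneg
  -- norm of difference bounded by variation increment
  have normle : ∀ t t' : ℝ, 0 ≤ t → t ≤ t' → t' ≤ T → ‖u t' - u t‖ ≤ V t' - V t := by
    intro t t' h0 h1 h2
    have h3 : edist (u t') (u t) ≤ eVariationOn u (Icc t t') :=
      eVariationOn.edist_le u (by exact ⟨h1, le_rfl⟩) (⟨le_rfl, h1⟩)
    have := ENNReal.toReal_mono (finIcc t t' h0 h1 h2) h3
    rw [← dist_edist, dist_eq_norm] at this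
    rw [add t t' h0 h1 h2]
    linarith
  -- increment of variation bounded by integral increment
  have VleG : ∀ t t' : ℝ, 0 ≤ t → t ≤ t' → t' ≤ T → V t' - V t ≤ G t' - G t := by
    intro t t' h0 h1 h2
    have hb : (eVariationOn u (Icc t t')).toReal ≤ ∫ τ in t..t', ‖f' τ‖ := by
      have := ENNReal.toReal_mono ENNReal.ofReal_ne_top (evar_le_int hint hrep h0 h1 h2)
      rwa [ENNReal.toReal_ofReal (intervalIntegral.integral_nonneg h1 fun _ _ => norm_nonneg _)]
        at this
    have i1 : IntervalIntegrable (fun τ => ‖f' τ‖) volume 0 t' := by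
      apply hint.norm.mono_set
      rw [uIcc_of_le (h0.trans h1), uIcc_of_le (h0.trans (h1.trans h2))]
      exact Icc_subset_Icc le_rfl h2
    have i2 : IntervalIntegrable (fun τ => ‖f' τ‖) volume 0 t := by
      apply hint.norm.mono_set
      rw [uIcc_of_le h0, uIcc_of_le (h0.trans (h1.trans h2))]
      exact Icc_subset_Icc le_rfl (h1.trans h2)
    have hGdiff : G t' - G t = ∫ τ in t..t', ‖f' τ‖ := integral_interval_sub_left i1 i2
    rw [add t t' h0 h1 h2]
    linarith
  -- continuity of V on Icc 0 T
  have Gcont : ContinuousOn G (Icc 0 T) := by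
    have := intervalIntegral.continuousOn_primitive_interval' hint.norm left_mem_uIcc
    rwa [uIcc_of_le hT.le] at this
  have hVG : ∀ t ∈ Icc (0:ℝ) T, ∀ t' ∈ Icc (0:ℝ) T, dist (V t) (V t') ≤ dist (G t) (G t') := by
    have base : ∀ t t' : ℝ, t ∈ Icc (0:ℝ) T → t' ∈ Icc (0:ℝ) T → t ≤ t' →
        dist (V t) (V t') ≤ dist (G t) (G t') := by
      intro t t' ht ht' h1
      have h2 := VleG t t' ht.1 h1 ht'.2
      have h3 : V t ≤ V t' := Vmono t t' ht.1 h1 ht'.2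
      rw [dist_comm, Real.dist_eq, Real.dist_eq, abs_of_nonneg (by linarith)]
      calc V t' - V t ≤ G t' - G t := h2
        _ ≤ |G t' - G t| := le_abs_self _
        _ = |G t - G t'| := abs_sub_comm _ _
    intro t ht t' ht'
    rcases le_total t t' with h | h
    · exact base t t' ht ht' h
    · rw [dist_comm, dist_comm (G t)]; exact base t' t ht' ht h
  have Vcont : ContinuousOn V (Icc 0 T) := by
    intro t ht
    rw [Metric.continuousWithinAt_iff]
    intro ε hε
    obtain ⟨δ, hδ, hδ'⟩ := Metric.continuousWithinAt_iff.1 (Gcont t ht) ε hε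
    exact ⟨δ, hδ, fun x hx hxd => lt_of_le_of_lt (hVG x hx t ht) (hδ' hx hxd)⟩
  have σcont : ContinuousOn σ (Icc 0 T) := continuousOn_id.add Vcont
  have V0 : V 0 = 0 := by
    rw [hV]; simp only [Icc_self]
    rw [eVariationOn.subsingleton u subsingleton_singleton]; simp
  have σ0 : σ 0 = 0 := by rw [hσ]; simp [V0]
  have σmono : ∀ t t' : ℝ, 0 ≤ t → t < t' → t' ≤ T → σ t < σ t' := by
    intro t t' h0 h1 h2
    have := Vmono t t' h0 h1.le h2
    simp only [hσ]
    linarith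
  -- the inverse property on [0, σ T]
  have hval : ∀ t ∈ Icc (0:ℝ) T, φ0 (σ t) = t := by
    intro t ht
    exact hinv t ht
  set W := σ T with hW
  have hWle : W ≤ T + K := by simp only [hW, hσ]; linarith
  have hWpos : 0 ≤ W := by simp only [hW, hσ]; have := Vnonneg T; linarith
  -- key inequality
  have key : ∀ t t' : ℝ, t ∈ Icc (0:ℝ) T → t' ∈ Icc (0:ℝ) T → t ≤ t' →
      (t' - t) + ‖u t' - u t‖ ≤ σ t' - σ t := by
    intro t t' ht ht' h1
    have := normle t t' ht.1 h1 ht'.2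
    simp only [hσ]
    linarith
  -- surjectivity onto [0, W]
  have surj : ∀ s ∈ Icc (0:ℝ) W, ∃ t ∈ Icc (0:ℝ) T, σ t = s := by
    intro s hs
    have : s ∈ Icc (σ 0) (σ T) := by rw [σ0]; exact hs
    obtain ⟨t, ht, hts⟩ := intermediate_value_Icc hT.le σcont this
    exact ⟨t, ht, hts⟩
  -- main claim for ordered pairs
  have main : ∀ s ∈ Icc (0:ℝ) (T + K), ∀ s' ∈ Icc (0:ℝ) (T + K), s ≤ s' →
      |φ0 s - φ0 s'| + ‖u (φ0 s) - u (φ0 s')‖ ≤ |s - s'| := by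
    intro s hs s' hs' hss'
    rcases le_total s' W with hcA | hcB
    · -- both ≤ W
      obtain ⟨t, ht, hts⟩ := surj s ⟨hs.1, hss'.trans hcA⟩
      obtain ⟨t', ht', hts'⟩ := surj s' ⟨hs'.1, hcA⟩
      have htt' : t ≤ t' := by
        by_contra h
        push_neg at h
        have := σmono t' t ht'.1 h ht.2
        rw [hts, hts'] at this
        linarith
      have h1 : φ0 s = t := by rw [← hts]; exact hval t ht
      have h2 : φ0 s' = t' := by rw [← hts']; exact hval t' ht'
      rw [h1, h2, abs_of_nonpos (by linarith), abs_of_nonpos (by linarith), norm_sub_rev]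
      have := key t t' ht ht' htt'
      rw [hts, hts'] at this
      linarith
    · rcases le_total s W with hsA | hsB
      · -- s ≤ W ≤ s'
        obtain ⟨t, ht, hts⟩ := surj s ⟨hs.1, hsA⟩
        have h1 : φ0 s = t := by rw [← hts]; exact hval t ht
        have h2 : φ0 s' = T := hext s' ⟨hcB, hs'.2⟩
        rw [h1, h2, abs_of_nonpos (by linarith [ht.2]), abs_of_nonpos (by linarith), norm_sub_rev]
        have := key t T ht ⟨hT.le, le_rfl⟩ ht.2
        rw [hts] at this
        linarith
      · -- W ≤ s ≤ s'
        have h1 : φ0 s = T := hext s ⟨hsB, hs.2⟩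
        have h2 : φ0 s' = T := hext s' ⟨hcB, hs'.2⟩
        rw [h1, h2]
        simp [abs_of_nonpos (show s - s' ≤ 0 by linarith)]
        linarith
  intro s hs s' hs'
  rcases le_total s s' with h | h
  · exact main s hs s' hs' h
  · rw [abs_sub_comm (φ0 s), norm_sub_rev, abs_sub_comm s]
    exact main s' hs' s hs h

set_option maxHeartbeats 1000000
set_option synthInstance.maxHeartbeats 400000

/-- Arc-length reparametrizations of absolutely continuous inputs with equibounded
variation are 1-Lipschitz (in the graph ℓ¹ metric), and a subsequence converges
uniformly to a Lipschitz pair `(φ₀, φ)` with `φ₀' + |φ'| ≤ 1` a.e. (Ascoli–Arzelà). -/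
theorem arc_length_compactness {m : ℕ} (T K : ℝ) (hT : 0 < T) (hK : 0 < K)
    (u₀ : EuclideanSpace ℝ (Fin m)) (uk : ℕ → ℝ → EuclideanSpace ℝ (Fin m))
    (hAC : ∀ k, AbsCont (uk k) 0 T) (h0 : ∀ k, uk k 0 = u₀)
    (hvar : ∀ k, (eVariationOn (uk k) (Icc 0 T)).toReal ≤ K)
    (φ0k : ℕ → ℝ → ℝ)
    (hinv : ∀ k, ∀ t ∈ Icc (0:ℝ) T,
      φ0k k (t + (eVariationOn (uk k) (Icc 0 t)).toReal) = t)
    (hext : ∀ k, ∀ s ∈ Icc (T + (eVariationOn (uk k) (Icc 0 T)).toReal) (T + K),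
      φ0k k s = T)
    (hmaps : ∀ k, MapsTo (φ0k k) (Icc 0 (T + K)) (Icc 0 T)) :
    (∀ k, ∀ s ∈ Icc (0:ℝ) (T + K), ∀ s' ∈ Icc (0:ℝ) (T + K),
      |φ0k k s - φ0k k s'| + ‖uk k (φ0k k s) - uk k (φ0k k s')‖ ≤ |s - s'|) ∧
    ∃ ι : ℕ → ℕ, StrictMono ι ∧ ∃ φ₀ : ℝ → ℝ, ∃ φ : ℝ → EuclideanSpace ℝ (Fin m),
      TendstoUniformlyOn (fun j s => ((φ0k (ι j) s : ℝ), uk (ι j) (φ0k (ι j) s)))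
        (fun s => (φ₀ s, φ s)) atTop (Icc 0 (T + K)) ∧
      (∀ s ∈ Icc (0:ℝ) (T + K), ∀ s' ∈ Icc (0:ℝ) (T + K),
        |φ₀ s - φ₀ s'| + ‖φ s - φ s'‖ ≤ |s - s'|) ∧
      (∀ᵐ s ∂(volume.restrict (Icc (0:ℝ) (T + K))),
        ∃ d₀ : ℝ, ∃ d : EuclideanSpace ℝ (Fin m),
          HasDerivAt φ₀ d₀ s ∧ HasDerivAt φ d s ∧ d₀ + ‖d‖ ≤ 1) := by
  have hle : (0:ℝ) ≤ T + K := by linarith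
  have lip : ∀ k, ∀ s ∈ Icc (0:ℝ) (T + K), ∀ s' ∈ Icc (0:ℝ) (T + K),
      |φ0k k s - φ0k k s'| + ‖uk k (φ0k k s) - uk k (φ0k k s')‖ ≤ |s - s'| :=
    fun k => graph_lip hT hK (hAC k) (hvar k) (hinv k) (hext k)
  refine ⟨lip, ?_⟩
  haveI : CompactSpace ↥(Icc (0:ℝ) (T + K)) := isCompact_iff_compactSpace.mp isCompact_Icc
  -- the graph maps, as 1-Lipschitz maps on the compact interval
  have lippair : ∀ k, LipschitzWith 1
      (fun x : ↥(Icc (0:ℝ) (T + K)) => ((φ0k k ↑x, uk k (φ0k k ↑x)) : ℝ × EuclideanSpace ℝ (Fin m))) := by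
    intro k
    rw [lipschitzWith_iff_dist_le_mul]
    intro x y
    rw [Prod.dist_eq, Subtype.dist_eq]
    simp only [NNReal.coe_one, one_mul]
    have h := lip k ↑x x.2 ↑y y.2
    apply max_le
    · rw [Real.dist_eq, Real.dist_eq]
      have := norm_nonneg (uk k (φ0k k ↑x) - uk k (φ0k k ↑y))
      linarith
    · rw [dist_eq_norm, Real.dist_eq]
      have := abs_nonneg (φ0k k ↑x - φ0k k ↑y)
      linarith
  set gk : ℕ → (↥(Icc (0:ℝ) (T + K)) →ᵇ ℝ × EuclideanSpace ℝ (Fin m)) := fun k =>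
    BoundedContinuousFunction.mkOfCompact ⟨_, (lippair k).continuous⟩ with hgk
  -- range in a fixed compact set
  have fink : ∀ k, eVariationOn (uk k) (Icc 0 T) ≠ ⊤ := by
    intro k
    obtain ⟨f', hi, hr⟩ := hAC k
    exact ne_top_of_le_ne_top ENNReal.ofReal_ne_top (evar_le_int hi hr le_rfl hT.le le_rfl)
  have in_s : ∀ (f : ↥(Icc (0:ℝ) (T + K)) →ᵇ ℝ × EuclideanSpace ℝ (Fin m)) (x : ↥(Icc (0:ℝ) (T + K))),
      f ∈ range gk → f x ∈ (Icc (0:ℝ) T ×ˢ Metric.closedBall u₀ K) := by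
    rintro f x ⟨k, rfl⟩
    refine ⟨hmaps k x.2, ?_⟩
    rw [Metric.mem_closedBall, ← h0 k]
    have h1 : edist (uk k (φ0k k ↑x)) (uk k 0) ≤ eVariationOn (uk k) (Icc 0 T) :=
      eVariationOn.edist_le (uk k) (hmaps k x.2) ⟨le_rfl, hT.le⟩
    have h2 := ENNReal.toReal_mono (fink k) h1
    rw [← dist_edist] at h2
    exact h2.trans (hvar k)
  have equicont : Equicontinuous ((↑) : ↥(range gk) → ↥(Icc (0:ℝ) (T + K)) → ℝ × EuclideanSpace ℝ (Fin m)) := by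
    apply Metric.equicontinuous_of_continuity_modulus id (by simpa using (tendsto_id (x := 𝓝 (0:ℝ))))
    rintro x y ⟨f, k, rfl⟩
    simpa [hgk] using (lippair k).dist_le_mul x y
  have hcl : IsCompact (closure (range gk)) :=
    BoundedContinuousFunction.arzela_ascoli _
      (isCompact_Icc.prod (isCompact_closedBall u₀ K)) _ in_s equicont
  obtain ⟨F, -, ι, hι, hconv⟩ :=
    hcl.tendsto_subseq (fun k => subset_closure (mem_range_self k))
  set φ₀ : ℝ → ℝ := fun s => (F (projIcc 0 (T + K) hle s)).1 with hφ₀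
  set φ : ℝ → EuclideanSpace ℝ (Fin m) := fun s => (F (projIcc 0 (T + K) hle s)).2 with hφ
  have huc : TendstoUniformlyOn (fun j s => ((φ0k (ι j) s : ℝ), uk (ι j) (φ0k (ι j) s)))
      (fun s => (φ₀ s, φ s)) atTop (Icc 0 (T + K)) := by
    rw [tendstoUniformlyOn_iff_tendstoUniformly_comp_coe]
    have h1 := BoundedContinuousFunction.tendsto_iff_tendstoUniformly.mp hconv
    have h2 : ((fun s => (φ₀ s, φ s)) ∘ ((↑) : ↥(Icc (0:ℝ) (T + K)) → ℝ)) = ⇑F := by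
      funext x
      simp only [Function.comp_apply, hφ₀, hφ, projIcc_val]
    rw [h2]
    exact h1
  have hLip : ∀ s ∈ Icc (0:ℝ) (T + K), ∀ s' ∈ Icc (0:ℝ) (T + K),
      |φ₀ s - φ₀ s'| + ‖φ s - φ s'‖ ≤ |s - s'| := by
    intro s hs s' hs'
    have c1 := huc.tendsto_at hs
    have c2 := huc.tendsto_at hs'
    refine le_of_tendsto
      (((((continuous_fst.tendsto _).comp c1).sub ((continuous_fst.tendsto _).comp c2)).abs).add
        ((((continuous_snd.tendsto _).comp c1).sub ((continuous_snd.tendsto _).comp c2)).norm))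
      (Eventually.of_forall fun j => lip (ι j) s hs s' hs')
  have hLipG : ∀ s s' : ℝ, |φ₀ s - φ₀ s'| + ‖φ s - φ s'‖ ≤ |s - s'| := by
    intro s s'
    have h1 := hLip (↑(projIcc 0 (T + K) hle s)) (projIcc 0 (T + K) hle s).2
      (↑(projIcc 0 (T + K) hle s')) (projIcc 0 (T + K) hle s').2
    have e1 : φ₀ ↑(projIcc 0 (T + K) hle s) = φ₀ s := by
      simp only [hφ₀, projIcc_val]
    have e1' : φ₀ ↑(projIcc 0 (T + K) hle s') = φ₀ s' := by
      simp only [hφ₀, projIcc_val]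
    have e2 : φ ↑(projIcc 0 (T + K) hle s) = φ s := by
      simp only [hφ, projIcc_val]
    have e2' : φ ↑(projIcc 0 (T + K) hle s') = φ s' := by
      simp only [hφ, projIcc_val]
    rw [e1, e1', e2, e2'] at h1
    have h2 : dist (↑(projIcc 0 (T + K) hle s) : ℝ) ↑(projIcc 0 (T + K) hle s') ≤ dist s s' := by
      have := (LipschitzWith.projIcc hle).dist_le_mul s s'
      simpa [Subtype.dist_eq] using this
    rw [Real.dist_eq, Real.dist_eq] at h2
    exact h1.trans h2
  refine ⟨ι, hι, φ₀, φ, huc, hLip, ?_⟩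
  have lipφ0 : LipschitzWith 1 φ₀ := by
    apply LipschitzWith.of_dist_le_mul
    intro s s'
    rw [Real.dist_eq, Real.dist_eq, NNReal.coe_one, one_mul]
    have h1 := hLipG s s'
    have h2 := norm_nonneg (φ s - φ s')
    linarith
  have lipφ : LipschitzWith 1 φ := by
    apply LipschitzWith.of_dist_le_mul
    intro s s'
    rw [dist_eq_norm, Real.dist_eq, NNReal.coe_one, one_mul]
    have h1 := hLipG s s'
    have h2 := abs_nonneg (φ₀ s - φ₀ s')
    linarith
  have had0 := lipφ0.ae_differentiableAt (μ := volume)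
  have had := lipφ.ae_differentiableAt (μ := volume)
  filter_upwards [ae_restrict_of_ae had0, ae_restrict_of_ae had] with s h₁ h₂
  refine ⟨deriv φ₀ s, deriv φ s, h₁.hasDerivAt, h₂.hasDerivAt, ?_⟩
  have hsub : Ioi s ⊆ {s}ᶜ := fun x hx => (Set.mem_compl_singleton_iff).mpr (ne_of_gt hx)
  have t0 : Tendsto (slope φ₀ s) (𝓝[>] s) (𝓝 (deriv φ₀ s)) :=
    (hasDerivAt_iff_tendsto_slope.mp h₁.hasDerivAt).mono_left (nhdsWithin_mono s hsub)
  have t1 : Tendsto (fun x => ‖slope φ s x‖) (𝓝[>] s) (𝓝 ‖deriv φ s‖) :=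
    ((hasDerivAt_iff_tendsto_slope.mp h₂.hasDerivAt).mono_left (nhdsWithin_mono s hsub)).norm
  refine le_of_tendsto (t0.add t1) ?_
  filter_upwards [self_mem_nhdsWithin] with x hx
  have hxs : 0 < x - s := sub_pos.2 hx
  have hb := hLipG x s
  have e1 : slope φ₀ s x = (φ₀ x - φ₀ s) / (x - s) := slope_def_field φ₀ s x
  have e2 : ‖slope φ s x‖ = ‖φ x - φ s‖ / (x - s) := by
    rw [slope_def_module, norm_smul, norm_inv, Real.norm_eq_abs, abs_of_pos hxs,
      div_eq_inv_mul]
  rw [e1, e2, ← add_div, div_le_one hxs]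
  rw [abs_of_pos hxs] at hb
  have h3 := le_abs_self (φ₀ x - φ₀ s)
  linarith
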